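/- In a graph G, the set of all vertices that belong to some maximum independent set induces a 1-extendable subgraph of G. -/

import Mathlib

open scoped Classical

variable {V : Type*}

/-- `S` is an independent set of the graph `G`. -/
def IndepF (G : SimpleGraph V) (S : Finset V) : Prop :=
  ∀ u ∈ S, ∀ v ∈ S, ¬ G.Adj u v

/-- The independence number of `G`. -/
noncomputable def alphaN [Fintype V] (G : SimpleGraph V) : ℕ :=
  Finset.univ.powerset.sup fun S => if IndepF G S then S.card else 0

/-- `G` is 1-extendable: every vertex belongs to a maximum independent set. -/
def OneExt [Fintype V] (G : SimpleGraph V) : Prop :=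
  ∀ v : V, ∃ S : Finset V, v ∈ S ∧ IndepF G S ∧ S.card = alphaN G

/-- The 1-extendable chromatic number of `G`. -/
noncomputable def chiOneExt [Fintype V] (G : SimpleGraph V) : ℕ :=
  sInf {k | ∃ c : V → Fin k, ∀ i : Fin k, OneExt (G.induce {v | c v = i})}

/-- The join (complete sum) of two graphs. -/
def gJoin {α β : Type*} (G : SimpleGraph α) (H : SimpleGraph β) : SimpleGraph (α ⊕ β) where
  Adj u v := match u, v with
    | Sum.inl u, Sum.inl v => G.Adj u v
    | Sum.inr u, Sum.inr v => H.Adj u v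
    | Sum.inl _, Sum.inr _ => True
    | Sum.inr _, Sum.inl _ => True
  symm := by constructor; rintro (u|u) (v|v) h <;> simp_all [SimpleGraph.adj_comm]
  loopless := by constructor; rintro (u|u) h <;> simp_all

lemma card_le_alphaN [Fintype V] {G : SimpleGraph V} {S : Finset V} (h : IndepF G S) :
    S.card ≤ alphaN G := by
  have := Finset.le_sup (f := fun S => if IndepF G S then S.card else 0)
    (Finset.mem_powerset.mpr (Finset.subset_univ S))
  simpa [h, alphaN] using this

lemma alphaN_le [Fintype V] {G : SimpleGraph V} {n : ℕ}
    (h : ∀ S : Finset V, IndepF G S → S.card ≤ n) : alphaN G ≤ n := by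
  refine Finset.sup_le fun S _ => ?_
  split_ifs with hS
  · exact h S hS
  · exact Nat.zero_le n

/-- The set of vertices belonging to some maximum independent set induces a
1-extendable subgraph. -/
theorem induce_maxIndep_vertices_oneExt [Fintype V] (G : SimpleGraph V) :
    OneExt (G.induce {v : V | ∃ S : Finset V, v ∈ S ∧ IndepF G S ∧ S.card = alphaN G}) := by
  set W : Set V := {v : V | ∃ S : Finset V, v ∈ S ∧ IndepF G S ∧ S.card = alphaN G} with hW
  set G' := G.induce W with hG'
  -- lifting a max indep set
  have lift : ∀ S : Finset V, IndepF G S → S.card = alphaN G →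
      ∃ S' : Finset ↥W, IndepF G' S' ∧ S'.card = S.card ∧ ∀ x : ↥W, x.1 ∈ S → x ∈ S' := by
    intro S hS hcard
    have hsub : ∀ u ∈ S, u ∈ W := fun u hu => ⟨S, hu, hS, hcard⟩
    refine ⟨S.subtype (· ∈ W), ?_, ?_, ?_⟩
    · intro u hu v hv hadj
      simp only [Finset.mem_subtype] at hu hv
      exact hS u.1 hu v.1 hv hadj
    · rw [Finset.card_subtype, Finset.filter_true_of_mem hsub]
    · intro x hx
      simp [Finset.mem_subtype, hx]
  -- alphaN G' = alphaN G
  have halpha : alphaN G' = alphaN G := by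
    apply le_antisymm
    · refine alphaN_le fun T hT => ?_
      have : IndepF G (T.map ⟨Subtype.val, Subtype.val_injective⟩) := by
        intro u hu v hv hadj
        simp only [Finset.mem_map, Function.Embedding.coeFn_mk] at hu hv
        obtain ⟨a, ha, rfl⟩ := hu
        obtain ⟨b, hb, rfl⟩ := hv
        exact hT a ha b hb hadj
      simpa using card_le_alphaN this
    · obtain ⟨v⟩ := ‹Fintype V›
      -- get some max indep set of G: need existence. Use sup attained.
      obtain ⟨S, -, hS⟩ := Finset.exists_mem_eq_sup Finset.univ.powerset
        (by simp) (fun S => if IndepF G S then S.card else 0)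
      by_cases hind : IndepF G S
      · have hcard : S.card = alphaN G := by unfold alphaN; rw [hS, if_pos hind]
        obtain ⟨S', hS', hc, -⟩ := lift S hind hcard
        calc alphaN G = S'.card := by rw [hc, hcard]
          _ ≤ alphaN G' := card_le_alphaN hS'
      · have : alphaN G = 0 := by unfold alphaN; rw [hS, if_neg hind]
        simp [this]
  intro v
  obtain ⟨S, hv, hS, hcard⟩ := v.2
  obtain ⟨S', hS', hc, hmem⟩ := lift S hS hcard
  exact ⟨S', hmem v hv, hS', by rw [hc, hcard, halpha]⟩
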